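/- Let K be a field, A = Λ_K(Y₁,…,Yₛ) the exterior (Grassmann) algebra on s odd generators, and f = Σ_L c_L Y^L a nonzero element of the augmentation ideal (c_∅ = 0). Let L₁,…,L_t be the minimal elements of Exp(f) = {L : c_L ≠ 0} under inclusion, and let k = ind(f) be the minimal cardinality of a subset K ⊆ {1,…,s} meeting every Lᵢ. Then for an extremal set K of f, the monomial Y^{{1,…,s}\K} does not lie in the ideal Af; consequently Ksdim₁(A/Af) ≥ s − ind(f). -/

import Mathlib

open ExteriorAlgebra

/-- The monomial `Y^L = ∏_{i ∈ L} Yᵢ` in the exterior algebra `Λ_K(Y₁,…,Yₛ)`,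
the product being taken in increasing order of indices. -/
noncomputable def Ymon (K : Type*) [Field K] (s : ℕ) (L : Finset (Fin s)) :
    ExteriorAlgebra K (Fin s → K) :=
  ((L.sort (· ≤ ·)).map (fun i => ι K (Pi.single i (1 : K)))).prod

/-- The two-sided ideal `AfA` generated by `f`. -/
def idealOf {A : Type*} [Ring A] (f : A) : Ideal A :=
  Ideal.span {x : A | ∃ a b : A, x = a * f * b}

/-- `L` belongs to the basement of `f = Σ c_L Y^L`: it is a minimal element of
`Exp(f) = {L | c_L ≠ 0}`. -/
def InBasement {K : Type*} [Field K] {s : ℕ}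
    (c : Finset (Fin s) → K) (L : Finset (Fin s)) : Prop :=
  c L ≠ 0 ∧ ∀ L', c L' ≠ 0 → L' ⊆ L → L' = L

lemma Ymon_eq_iotaMulti (K : Type*) [Field K] (s : ℕ) (L : Finset (Fin s)) :
    Ymon K s L = ιMulti K L.card (fun i => Pi.single (L.orderEmbOfFin rfl i) (1 : K)) := by
  rw [ιMulti_apply, Ymon]
  congr 1
  apply List.ext_getElem
  · simp
  · intro n h1 h2
    simp [Finset.orderEmbOfFin_apply]

noncomputable def detFam (K : Type*) [Field K] (s k : ℕ) (e : Fin k → Fin s) :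
    ∀ n, (Fin s → K) [⋀^Fin n]→ₗ[K] K := fun n =>
  if h : n = k then
    (Matrix.detRowAlternating.compLinearMap (LinearMap.funLeft K K e)).domDomCongr
      (finCongr h.symm)
  else 0

lemma Ymon_ne_zero (K : Type*) [Field K] (s : ℕ) (L : Finset (Fin s)) :
    Ymon K s L ≠ 0 := by
  intro h0
  have := congrArg (liftAlternating (detFam K s L.card (L.orderEmbOfFin rfl))) h0
  rw [Ymon_eq_iotaMulti, liftAlternating_apply_ιMulti, map_zero] at this
  have hd : detFam K s L.card (L.orderEmbOfFin rfl) L.card =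
      (Matrix.detRowAlternating.compLinearMap
        (LinearMap.funLeft K K (L.orderEmbOfFin rfl))).domDomCongr (finCongr rfl) :=
    dif_pos rfl
  rw [hd] at this
  rw [AlternatingMap.domDomCongr_apply, AlternatingMap.compLinearMap_apply] at this
  have hmat : (fun i : Fin L.card => LinearMap.funLeft K K (L.orderEmbOfFin rfl)
      (Pi.single (M := fun _ : Fin s => K) (L.orderEmbOfFin rfl (finCongr rfl i)) 1))
      = (1 : Matrix (Fin L.card) (Fin L.card) K) := by
    funext i j
    simp only [LinearMap.funLeft_apply, finCongr_refl, Equiv.refl_apply, Matrix.one_apply,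
      Pi.single_apply]
    by_cases hij : i = j
    · simp [hij]
    · rw [if_neg, if_neg hij]
      exact fun hh => hij ((L.orderEmbOfFin rfl).injective hh.symm)
  erw [hmat] at this
  rw [show Matrix.detRowAlternating (1 : Matrix (Fin L.card) (Fin L.card) K)
      = (1 : Matrix (Fin L.card) (Fin L.card) K).det from rfl, Matrix.det_one] at this
  exact one_ne_zero this

lemma exists_basement {K : Type*} [Field K] {s : ℕ} (c : Finset (Fin s) → K) :
    ∀ L : Finset (Fin s), c L ≠ 0 → ∃ L', L' ⊆ L ∧ InBasement c L' := by
  intro L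
  induction L using Finset.strongInductionOn with
  | _ L ih =>
    intro h
    by_cases hm : ∀ L', c L' ≠ 0 → L' ⊆ L → L' = L
    · exact ⟨L, subset_rfl, h, hm⟩
    · push_neg at hm
      obtain ⟨L', h1, h2, h3⟩ := hm
      obtain ⟨L'', hsub, hb⟩ := ih L' (HasSubset.Subset.ssubset_of_ne h2 h3) h1
      exact ⟨L'', hsub.trans h2, hb⟩

noncomputable def killE {K : Type*} [Field K] {s : ℕ} (E : Finset (Fin s)) :
    (Fin s → K) →ₗ[K] (Fin s → K) :=
  LinearMap.pi fun i => if i ∈ E then 0 else LinearMap.proj i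

lemma killE_single_mem {K : Type*} [Field K] {s : ℕ} (E : Finset (Fin s)) {j : Fin s}
    (hj : j ∈ E) : killE (K := K) E (Pi.single j 1) = 0 := by
  funext i
  simp only [killE, LinearMap.pi_apply, Pi.zero_apply]
  split_ifs with h
  · exact LinearMap.zero_apply _
  · rw [LinearMap.proj_apply, Pi.single_eq_of_ne (fun hij => h (by rwa [hij]))]

lemma killE_single_not_mem {K : Type*} [Field K] {s : ℕ} (E : Finset (Fin s)) {j : Fin s}
    (hj : j ∉ E) : killE (K := K) E (Pi.single j 1) = Pi.single j 1 := by
  funext i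
  simp only [killE, LinearMap.pi_apply]
  split_ifs with h
  · rw [LinearMap.zero_apply, Pi.single_eq_of_ne (fun hij => hj (by rwa [hij] at h))]
  · rfl

lemma map_Ymon_of_disjoint {K : Type*} [Field K] {s : ℕ} (E : Finset (Fin s))
    (L : Finset (Fin s)) (hLE : ∀ i ∈ L, i ∉ E) :
    ExteriorAlgebra.map (killE (K := K) E) (Ymon K s L) = Ymon K s L := by
  rw [Ymon, map_list_prod, List.map_map]
  congr 1
  apply List.map_congr_left
  intro i hi
  simp only [Function.comp_apply, map_apply_ι,
    killE_single_not_mem E (hLE i ((Finset.mem_sort _).mp hi))]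

lemma map_Ymon_of_inter {K : Type*} [Field K] {s : ℕ} (E : Finset (Fin s))
    (L : Finset (Fin s)) (hLE : (L ∩ E).Nonempty) :
    ExteriorAlgebra.map (killE (K := K) E) (Ymon K s L) = 0 := by
  obtain ⟨j, hj⟩ := hLE
  rw [Finset.mem_inter] at hj
  rw [Ymon, map_list_prod, List.map_map]
  apply List.prod_eq_zero
  rw [List.mem_map]
  refine ⟨j, (Finset.mem_sort _).mpr hj.1, ?_⟩
  simp only [Function.comp_apply, map_apply_ι, killE_single_mem E hj.2, map_zero]

/-- Let `f = Σ_L c_L Y^L ∈ Λ_K(Y₁,…,Yₛ)` be nonzero with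
`c_∅ = 0`, and let `E` be an extremal set of `f` (a subset of minimal
cardinality meeting every element of the basement of `f`).  Then
`Y^{{1,…,s}∖E} ∉ Af`; consequently
`Ksdim₁(A/Af) = max{|L| : Y^L ∉ Af} ≥ s - ind(f)`. -/
theorem odd_dim_one_relation_ge
    {K : Type*} [Field K] (s : ℕ) (c : Finset (Fin s) → K) (hc0 : c ∅ = 0)
    (f : ExteriorAlgebra K (Fin s → K))
    (hf : f = ∑ L : Finset (Fin s), c L • Ymon K s L) (hfne : f ≠ 0)
    (E : Finset (Fin s))
    (hE : ∀ L : Finset (Fin s), InBasement c L → (L ∩ E).Nonempty)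
    (hEmin : ∀ E' : Finset (Fin s),
      (∀ L : Finset (Fin s), InBasement c L → (L ∩ E').Nonempty) →
      E.card ≤ E'.card) :
    Ymon K s (Finset.univ \ E) ∉ idealOf f ∧
    s - E.card ≤ sSup {n : ℕ | ∃ L : Finset (Fin s),
      L.card = n ∧ Ymon K s L ∉ idealOf f} := by
  have hφf : ExteriorAlgebra.map (killE (K := K) E) f = 0 := by
    rw [hf, map_sum]
    apply Finset.sum_eq_zero
    intro L _
    by_cases hcL : c L = 0
    · simp [hcL]
    · obtain ⟨L', hsub, hb⟩ := exists_basement c L hcL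
      have : (L ∩ E).Nonempty :=
        (hE L' hb).mono (Finset.inter_subset_inter_right hsub)
      rw [map_smul, map_Ymon_of_inter E L this, smul_zero]
  have key : Ymon K s (Finset.univ \ E) ∉ idealOf f := by
    intro hmem
    have hker : idealOf f ≤ RingHom.ker
        (ExteriorAlgebra.map (killE (K := K) E)).toRingHom := by
      rw [idealOf, Ideal.span_le]
      rintro x ⟨a, b, rfl⟩
      simp only [SetLike.mem_coe, RingHom.mem_ker, AlgHom.toRingHom_eq_coe,
        RingHom.coe_coe, map_mul, hφf, mul_zero, zero_mul]
    have h0 : ExteriorAlgebra.map (killE (K := K) E) (Ymon K s (Finset.univ \ E)) = 0 :=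
      hker hmem
    rw [map_Ymon_of_disjoint E _ (fun i hi => (Finset.mem_sdiff.mp hi).2)] at h0
    exact Ymon_ne_zero K s _ h0
  refine ⟨key, ?_⟩
  have hbdd : BddAbove {n : ℕ | ∃ L : Finset (Fin s),
      L.card = n ∧ Ymon K s L ∉ idealOf f} := by
    refine ⟨s, fun n hn => ?_⟩
    obtain ⟨L, hL, -⟩ := hn
    calc n = L.card := hL.symm
    _ ≤ Finset.univ.card := Finset.card_le_univ L
    _ = s := by simp
  refine le_csSup hbdd ⟨Finset.univ \ E, ?_, key⟩
  rw [Finset.card_sdiff_of_subset (Finset.subset_univ E), Finset.card_univ, Fintype.card_fin]
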